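/- (Bruss' Odds-Theorem) Let Z_1,…,Z_n be independent Bernoulli random variables with success probabilities p_t = P(Z_t = 1) < 1; set q_t = 1 − p_t and odds r_t = p_t/q_t. Define t* = max{1, max{k ∈ {1,…,n} : ∑_{j=k}^{n} r_j ≥ 1}} (with t* = 1 if the inner set is empty). Then the stopping time τ* = min({t ≥ t* : Z_t = 1} ∪ {n}) maximizes the probability of stopping at the last success, P(Z_τ = 1, Z_{τ+1} = ⋯ = Z_n = 0), over all stopping times τ of the filtration 𝒵_t = σ(Z_1,…,Z_t), and the maximal probability equals (∏_{j=t*}^{n} q_j) · (∑_{j=t*}^{n} r_j). -/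

import Mathlib

open MeasureTheory ProbabilityTheory Finset
open scoped ENNReal Classical

noncomputable section

/-- The σ-algebra on `Ω` generated by the functions `f 1, …, f t`. -/
def genFilt {Ω β : Type*} [MeasurableSpace β] (f : ℕ → Ω → β) (t : ℕ) :
    MeasurableSpace Ω :=
  ⨆ i ∈ Set.Icc 1 t, MeasurableSpace.comap (f i) inferInstance

/-- `τ` is a stopping time with values in `{1,…,n}` of the filtration generated by `f`. -/
def IsStopTime {Ω β : Type*} [MeasurableSpace β] (f : ℕ → Ω → β) (n : ℕ) (τ : Ω → ℕ) : Prop :=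
  (∀ ω, τ ω ∈ Set.Icc 1 n) ∧ ∀ t, MeasurableSet[genFilt f t] {ω | τ ω = t}

/-- The family `(f i)_{i ∈ s}` is independent under `μ`. -/
def IndepSeq {Ω β : Type*} [MeasurableSpace Ω] [MeasurableSpace β]
    (f : ℕ → Ω → β) (s : Set ℕ) (μ : Measure Ω) : Prop :=
  iIndepFun (m := fun _ : s => (inferInstance : MeasurableSpace β)) (fun i : s => f i.1) μ

/-- `N` is independent of the family `(f i)_{i ∈ s}`. -/
def IndepOfSeq {Ω β : Type*} [MeasurableSpace Ω] [MeasurableSpace β]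
    (N : Ω → ℕ) (f : ℕ → Ω → β) (s : Set ℕ) (μ : Measure Ω) : Prop :=
  IndepFun N (fun ω (i : s) => f i.1 ω) μ

/-- The absolute rank `A_{t,k}` of `X t` among `X 1, …, X k`
(the largest observation has rank 1). -/
def absRank {Ω : Type*} (X : ℕ → Ω → ℝ) (t k : ℕ) (ω : Ω) : ℕ :=
  ((Finset.Icc 1 k).filter fun j => X t ω ≤ X j ω).card

/-- The relative rank `R_t = A_{t,t}`. -/
def relRank {Ω : Type*} (X : ℕ → Ω → ℝ) (t : ℕ) (ω : Ω) : ℕ := absRank X t t ω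

/-- `(X i)_{i ∈ s}` are i.i.d. with an atomless (continuous) common distribution. -/
def IIDContinuousOn {Ω : Type*} [MeasurableSpace Ω] (X : ℕ → Ω → ℝ) (s : Set ℕ)
    (μ : Measure Ω) : Prop :=
  (∀ i ∈ s, Measurable (X i)) ∧ IndepSeq X s μ ∧
  (∀ i ∈ s, ∀ j ∈ s, IdentDistrib (X i) (X j) μ μ) ∧
  (∀ i ∈ s, ∀ x : ℝ, μ {ω | X i ω = x} = 0)

set_option linter.unusedSectionVars false
section BrussAux

variable {Ω : Type*} [MeasurableSpace Ω] {μ : Measure Ω} {n : ℕ} {Z : ℕ → Ω → Bool}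

lemma genFilt_le (hZmeas : ∀ t, Measurable (Z t)) (t : ℕ) :
    genFilt Z t ≤ ‹MeasurableSpace Ω› :=
  iSup₂_le fun i _ => (hZmeas i).comap_le

lemma genFilt_mono {s t : ℕ} (h : s ≤ t) : genFilt Z s ≤ genFilt Z t :=
  iSup₂_le fun i hi => le_iSup₂ (f := fun i (_ : i ∈ Set.Icc 1 t) =>
    MeasurableSpace.comap (Z i) inferInstance) i ⟨hi.1, hi.2.trans h⟩

lemma comap_le_genFilt {i t : ℕ} (h1 : 1 ≤ i) (h2 : i ≤ t) :
    MeasurableSpace.comap (Z i) inferInstance ≤ genFilt Z t :=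
  le_iSup₂ (f := fun i (_ : i ∈ Set.Icc 1 t) =>
    MeasurableSpace.comap (Z i) inferInstance) i ⟨h1, h2⟩

lemma aux_prod (hZindep : IndepSeq Z (Set.Icc 1 n) μ)
    (F : Finset ℕ) (hF : ∀ j ∈ F, j ∈ Set.Icc 1 n) (g : ℕ → Set Bool) :
    μ (⋂ j ∈ F, Z j ⁻¹' g j) = ∏ j ∈ F, μ (Z j ⁻¹' g j) := by
  classical
  set F' : Finset ↥(Set.Icc 1 n) := F.subtype _ with hF'def
  have h1 : (⋂ j ∈ F, Z j ⁻¹' g j) = ⋂ i ∈ F', Z i.1 ⁻¹' g i.1 := by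
    ext ω
    simp only [Set.mem_iInter, Finset.mem_subtype, hF'def]
    exact ⟨fun h i hi => h i.1 hi, fun h j hj => h ⟨j, hF j hj⟩ hj⟩
  have h2 := hZindep.meas_biInter (S := F') (s := fun i => Z i.1 ⁻¹' g i.1)
    (fun i _ => ⟨g i.1, trivial, rfl⟩)
  rw [h1, h2, hF'def]
  exact (Finset.prod_subtype_eq_prod_filter (fun j => μ (Z j ⁻¹' g j))).trans
    (by rw [Finset.filter_true_of_mem hF])

lemma aux_indep (hZmeas : ∀ t, Measurable (Z t)) (hZindep : IndepSeq Z (Set.Icc 1 n) μ)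
    {t : ℕ} (ht : t ≤ n) :
    Indep (genFilt Z t)
      (⨆ j ∈ Set.Icc (t+1) n, MeasurableSpace.comap (Z j) inferInstance) μ := by
  classical
  have h := indep_iSup_of_disjoint
    (m := fun i : ↥(Set.Icc 1 n) => MeasurableSpace.comap (Z i.1) inferInstance)
    (fun i => (hZmeas i.1).comap_le) hZindep.iIndep
    (S := {i : ↥(Set.Icc 1 n) | i.1 ≤ t}) (T := {i : ↥(Set.Icc 1 n) | t < i.1})
    (by rw [Set.disjoint_left]
        intro i hi hi'
        simp only [Set.mem_setOf_eq] at hi hi'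
        omega)
  have e1 : genFilt Z t = ⨆ i ∈ {i : ↥(Set.Icc 1 n) | i.1 ≤ t},
      MeasurableSpace.comap (Z i.1) inferInstance := by
    apply le_antisymm
    · exact iSup₂_le fun i hi => le_iSup₂ (f := fun (i : ↥(Set.Icc 1 n))
        (_ : i ∈ {i : ↥(Set.Icc 1 n) | i.1 ≤ t}) =>
        MeasurableSpace.comap (Z i.1) inferInstance) ⟨i, ⟨hi.1, hi.2.trans ht⟩⟩ hi.2
    · exact iSup₂_le fun i hi => le_iSup₂ (f := fun i (_ : i ∈ Set.Icc 1 t) =>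
        MeasurableSpace.comap (Z i) inferInstance) i.1 ⟨i.2.1, hi⟩
  have e2 : (⨆ j ∈ Set.Icc (t+1) n, MeasurableSpace.comap (Z j) inferInstance)
      = ⨆ i ∈ {i : ↥(Set.Icc 1 n) | t < i.1},
        MeasurableSpace.comap (Z i.1) inferInstance := by
    apply le_antisymm
    · exact iSup₂_le fun j hj => le_iSup₂ (f := fun (i : ↥(Set.Icc 1 n))
        (_ : i ∈ {i : ↥(Set.Icc 1 n) | t < i.1}) =>
        MeasurableSpace.comap (Z i.1) inferInstance)
        ⟨j, ⟨le_trans (Nat.le_add_left 1 t) hj.1, hj.2⟩⟩ hj.1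
    · exact iSup₂_le fun i hi => le_iSup₂ (f := fun j (_ : j ∈ Set.Icc (t+1) n) =>
        MeasurableSpace.comap (Z j) inferInstance) i.1 ⟨hi, i.2.2⟩
  rw [e1, e2]
  exact h

end BrussAux

section BrussAux2

variable {Ω : Type*} [MeasurableSpace Ω] {μ : Measure Ω} {n : ℕ} {Z : ℕ → Ω → Bool}

set_option linter.unusedSectionVars false in
lemma win_eq_sum [IsProbabilityMeasure μ]
    (hZmeas : ∀ t, Measurable (Z t)) (hZindep : IndepSeq Z (Set.Icc 1 n) μ)
    (τ : Ω → ℕ) (hτ : IsStopTime Z n τ) :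
    μ {ω | Z (τ ω) ω = true ∧ ∀ t, τ ω < t → t ≤ n → Z t ω = false}
      = ∑ t ∈ Finset.Icc 1 n, μ ({ω | τ ω = t} ∩ Z t ⁻¹' {true})
          * ∏ j ∈ Finset.Icc (t+1) n, μ (Z j ⁻¹' {false}) := by
  classical
  set part : ℕ → Set Ω := fun t =>
    ({ω | τ ω = t} ∩ Z t ⁻¹' {true}) ∩ ⋂ j ∈ Finset.Icc (t+1) n, Z j ⁻¹' {false}
    with hpart
  have hτt : ∀ t, MeasurableSet[genFilt Z t] ({ω | τ ω = t} ∩ Z t ⁻¹' {true}) := by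
    intro t
    rcases Nat.eq_zero_or_pos t with h0 | h0
    · subst h0
      have : {ω | τ ω = 0} = (∅ : Set Ω) := by
        ext ω; simp only [Set.mem_setOf_eq, Set.mem_empty_iff_false, iff_false]
        have := (hτ.1 ω).1; omega
      rw [this, Set.empty_inter]; exact @MeasurableSet.empty _ (genFilt Z 0)
    · exact (hτ.2 t).inter (comap_le_genFilt h0 le_rfl _ ⟨{true}, trivial, rfl⟩)
  have hmeas_part : ∀ t, MeasurableSet (part t) := by
    intro t
    refine ((genFilt_le hZmeas t _ (hτt t))).inter ?_
    exact MeasurableSet.biInter (Finset.Icc (t+1) n).countable_toSet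
      (fun j _ => (hZmeas j) (by trivial))
  have hdec : {ω | Z (τ ω) ω = true ∧ ∀ t, τ ω < t → t ≤ n → Z t ω = false}
      = ⋃ t ∈ Finset.Icc 1 n, part t := by
    ext ω
    simp only [Set.mem_setOf_eq, Set.mem_iUnion, hpart, Set.mem_inter_iff,
      Set.mem_preimage, Set.mem_singleton_iff, Set.mem_iInter, Finset.mem_Icc]
    constructor
    · rintro ⟨h1, h2⟩
      exact ⟨τ ω, ⟨(hτ.1 ω).1, (hτ.1 ω).2⟩, ⟨⟨rfl, h1⟩,
        fun j hj => h2 j hj.1 hj.2⟩⟩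
    · rintro ⟨t, _, ⟨⟨ht, h1⟩, h2⟩⟩
      subst ht
      exact ⟨h1, fun j hj1 hj2 => h2 j ⟨hj1, hj2⟩⟩
  have hdisj : (↑(Finset.Icc 1 n) : Set ℕ).PairwiseDisjoint part := by
    intro a _ b _ hab
    refine Set.disjoint_left.2 fun ω hω hω' => hab ?_
    have h1 : τ ω = a := hω.1.1
    have h2 : τ ω = b := hω'.1.1
    omega
  rw [hdec, measure_biUnion_finset hdisj fun t _ => hmeas_part t]
  refine Finset.sum_congr rfl fun t ht => ?_
  have ht1 : 1 ≤ t := (Finset.mem_Icc.1 ht).1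
  have htn : t ≤ n := (Finset.mem_Icc.1 ht).2
  have hindep := aux_indep hZmeas hZindep htn
  rw [Indep_iff] at hindep
  have hB : MeasurableSet[⨆ j ∈ Set.Icc (t+1) n,
      MeasurableSpace.comap (Z j) inferInstance]
      (⋂ j ∈ Finset.Icc (t+1) n, Z j ⁻¹' ({false} : Set Bool)) := by
    refine MeasurableSet.biInter (Finset.Icc (t+1) n).countable_toSet fun j hj => ?_
    have hj' := Finset.mem_Icc.1 hj
    exact le_iSup₂ (f := fun j (_ : j ∈ Set.Icc (t+1) n) =>
      MeasurableSpace.comap (Z j) inferInstance) j ⟨hj'.1, hj'.2⟩ _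
      ⟨{false}, trivial, rfl⟩
  rw [hpart, hindep _ _ (hτt t) hB,
    aux_prod hZindep _ (fun j hj => by
      have := Finset.mem_Icc.1 hj
      exact ⟨by omega, this.2⟩) (fun _ => {false})]

end BrussAux2

lemma bruss_arith {a b c' pk pi' uu tail : ℝ}
    (h0a : 0 ≤ a) (hab : a ≤ b) (hacp : a ≤ (b + c') * pk)
    (h0c' : 0 ≤ c') (h0u : 0 ≤ uu) (h0pi : 0 ≤ pi') (h0pk : 0 ≤ pk)
    (htail : tail ≤ c' * uu) :
    a * pi' + tail ≤ (b + c') * (pk * max pi' uu + (1 - pk) * uu) := by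
  rcases le_total pi' uu with hc | hc
  · rw [max_eq_right hc]
    nlinarith [mul_nonneg h0a (sub_nonneg.2 hc), mul_nonneg (sub_nonneg.2 hab) h0u]
  · rw [max_eq_left hc]
    nlinarith [mul_nonneg (sub_nonneg.2 hacp) (sub_nonneg.2 hc),
      mul_nonneg (sub_nonneg.2 hab) h0u]

/-- Bruss' Odds-Theorem: with odds `r_t = p_t/q_t` and
`t* = max{1, max{k ∈ {1,…,n} : ∑_{j=k}^n r_j ≥ 1}}`, the rule
`τ* = min({t ≥ t* : Z_t = 1} ∪ {n})` maximizes the probability of stopping at the last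
success over all stopping times of the natural filtration of `Z`, and the maximal
probability equals `(∏_{j=t*}^n q_j)(∑_{j=t*}^n r_j)`. -/
theorem stmt_18 {Ω : Type*} [MeasurableSpace Ω] (μ : Measure Ω) [IsProbabilityMeasure μ]
    (n : ℕ) (hn : 1 ≤ n)
    (Z : ℕ → Ω → Bool) (hZmeas : ∀ t, Measurable (Z t))
    (hZindep : IndepSeq Z (Set.Icc 1 n) μ)
    (p q r : ℕ → ℝ)
    (hp : ∀ t, p t = (μ {ω | Z t ω = true}).toReal)
    (hp1 : ∀ t ∈ Set.Icc 1 n, p t < 1)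
    (hq : ∀ t, q t = 1 - p t)
    (hr : ∀ t, r t = p t / q t)
    (tstar : ℕ)
    (htstar : tstar = max 1 (Nat.findGreatest (fun k => 1 ≤ ∑ j ∈ Finset.Icc k n, r j) n))
    (τstar : Ω → ℕ)
    (hτstar : ∀ ω, τstar ω = sInf ({t | t ∈ Set.Icc tstar n ∧ Z t ω = true} ∪ {n})) :
    IsGreatest {x : ℝ | ∃ τ : Ω → ℕ, IsStopTime Z n τ ∧
        x = (μ {ω | Z (τ ω) ω = true ∧
              ∀ t, τ ω < t → t ≤ n → Z t ω = false}).toReal}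
      ((μ {ω | Z (τstar ω) ω = true ∧
            ∀ t, τstar ω < t → t ≤ n → Z t ω = false}).toReal) ∧
    (μ {ω | Z (τstar ω) ω = true ∧ ∀ t, τstar ω < t → t ≤ n → Z t ω = false}).toReal
      = (∏ j ∈ Finset.Icc tstar n, q j) * ∑ j ∈ Finset.Icc tstar n, r j := by
  classical
  -- basic real facts
  have htrue : ∀ t, Z t ⁻¹' ({true} : Set Bool) = {ω | Z t ω = true} := fun t => rfl
  have hp0 : ∀ t, 0 ≤ p t := fun t => by rw [hp]; exact ENNReal.toReal_nonneg
  have hqpos : ∀ t ∈ Set.Icc 1 n, 0 < q t := fun t ht => by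
    rw [hq]; linarith [hp1 t ht]
  have hq1 : ∀ t, q t ≤ 1 := fun t => by rw [hq]; linarith [hp0 t]
  have hr0 : ∀ t ∈ Set.Icc 1 n, 0 ≤ r t := fun t ht => by
    rw [hr]; exact div_nonneg (hp0 t) (hqpos t ht).le
  have hts1 : 1 ≤ tstar := htstar ▸ le_max_left _ _
  have htsn : tstar ≤ n := htstar ▸ max_le hn (Nat.findGreatest_le n)
  set π : ℕ → ℝ := fun t => ∏ j ∈ Finset.Icc t n, q j with hπdef
  set S : ℕ → ℝ := fun t => ∑ j ∈ Finset.Icc t n, r j with hSdef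
  set W : ℕ → ℝ := fun t => π t * S t with hWdef
  set u : ℕ → ℝ := fun t => W (max t tstar) with hudef
  have hπ0 : ∀ t, 1 ≤ t → 0 ≤ π t := fun t ht =>
    Finset.prod_nonneg fun j hj => (hqpos j (by
      have := Finset.mem_Icc.1 hj; exact ⟨le_trans ht this.1, this.2⟩)).le
  have hS0 : ∀ t, 1 ≤ t → 0 ≤ S t := fun t ht =>
    Finset.sum_nonneg fun j hj => hr0 j (by
      have := Finset.mem_Icc.1 hj; exact ⟨le_trans ht this.1, this.2⟩)
  have hW0 : ∀ t, 1 ≤ t → 0 ≤ W t := fun t ht => mul_nonneg (hπ0 t ht) (hS0 t ht)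
  have hu0 : ∀ t, 0 ≤ u t := fun t => hW0 _ (le_trans hts1 (le_max_right _ _))
  have hSlt : ∀ t, tstar < t → S t < 1 := by
    intro t ht
    rcases le_or_gt t n with h | h
    · have := Nat.findGreatest_is_greatest (P := fun k => 1 ≤ ∑ j ∈ Finset.Icc k n, r j)
        (n := n) (k := t) (by omega) h
      simpa [hSdef] using not_le.1 this
    · have : Finset.Icc t n = ∅ := Finset.Icc_eq_empty (by omega)
      simp [hSdef, this]
  have hS1 : 1 < tstar → 1 ≤ S tstar := by
    intro h
    have hfg : tstar = Nat.findGreatest (fun k => 1 ≤ ∑ j ∈ Finset.Icc k n, r j) n := by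
      omega
    have : tstar ≠ 0 := by omega
    have := Nat.findGreatest_of_ne_zero hfg.symm this
    simpa [hSdef] using this
  have hπq : ∀ t, t ≤ n → π t = q t * π (t+1) := by
    intro t ht
    have h1 : Finset.Icc t n = Finset.Ico t (n+1) := by
      rw [Finset.Ico_add_one_right_eq_Icc]
    have h2 : Finset.Icc (t+1) n = Finset.Ico (t+1) (n+1) := by
      rw [Finset.Ico_add_one_right_eq_Icc]
    simp only [hπdef, h1, h2]
    exact Finset.prod_eq_prod_Ico_succ_bot (by omega) q
  have hSr : ∀ t, t ≤ n → S t = r t + S (t+1) := by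
    intro t ht
    have h1 : Finset.Icc t n = Finset.Ico t (n+1) := by
      rw [Finset.Ico_add_one_right_eq_Icc]
    have h2 : Finset.Icc (t+1) n = Finset.Ico (t+1) (n+1) := by
      rw [Finset.Ico_add_one_right_eq_Icc]
    simp only [hSdef, h1, h2]
    exact Finset.sum_eq_sum_Ico_succ_bot (by omega) r
  have hpq1 : ∀ t, p t + q t = 1 := fun t => by rw [hq]; ring
  have hqr : ∀ t ∈ Set.Icc 1 n, q t * r t = p t := by
    intro t ht
    rw [hr]
    field_simp [(hqpos t ht).ne']
  -- the recursion for the value function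
  have hrec : ∀ t, 1 ≤ t → t ≤ n →
      u t = p t * max (π (t+1)) (u (t+1)) + q t * u (t+1) := by
    intro t ht1 htn
    rcases le_or_gt tstar t with hc | hc
    · have e1 : max t tstar = t := by omega
      have e2 : max (t+1) tstar = t+1 := by omega
      have hmax : max (π (t+1)) (u (t+1)) = π (t+1) := by
        rw [hudef]
        simp only [e2]
        refine max_eq_left ?_
        have hlt : S (t+1) < 1 := hSlt _ (by omega)
        have := hπ0 (t+1) (by omega)
        calc W (t+1) = π (t+1) * S (t+1) := rfl
          _ ≤ π (t+1) * 1 := by nlinarith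
          _ = π (t+1) := by ring
      rw [hmax, hudef]
      simp only [e1, e2, hWdef]
      rw [hπq t htn, hSr t htn]
      linear_combination π (t + 1) * hqr t ⟨ht1, htn⟩
    · have e1 : max t tstar = tstar := by omega
      have e2 : max (t+1) tstar = tstar := by omega
      have hmax : max (π (t+1)) (u (t+1)) = u (t+1) := by
        rw [hudef]
        simp only [e2]
        refine max_eq_right ?_
        have h1lt : 1 < tstar := by omega
        have hS1' := hS1 h1lt
        have hπmono : π (t+1) ≤ π tstar := by
          have hsplit : π (t+1) = (∏ j ∈ Finset.Ico (t+1) tstar, q j) * π tstar := by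
            simp only [hπdef]
            rw [← Finset.Ico_add_one_right_eq_Icc, ← Finset.Ico_add_one_right_eq_Icc,
              ← Finset.prod_Ico_consecutive q (by omega : t+1 ≤ tstar) (by omega : tstar ≤ n+1)]
          rw [hsplit]
          have hle1 : (∏ j ∈ Finset.Ico (t+1) tstar, q j) ≤ 1 :=
            Finset.prod_le_one (fun j hj => (hqpos j (by
              have := Finset.mem_Ico.1 hj; constructor <;> omega)).le)
              (fun j _ => hq1 j)
          nlinarith [hπ0 tstar (by omega)]
        calc π (t+1) ≤ π tstar := hπmono
          _ ≤ π tstar * S tstar := by nlinarith [hπ0 tstar (by omega)]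
          _ = W tstar := rfl
      rw [hmax, hudef]
      simp only [e1, e2]
      linear_combination (-(W tstar)) * hpq1 t
  -- measure-to-real facts
  have hfalse : ∀ j, Z j ⁻¹' ({false} : Set Bool) = (Z j ⁻¹' ({true} : Set Bool))ᶜ := by
    intro j; ext ω
    simp only [Set.mem_preimage, Set.mem_singleton_iff, Set.mem_compl_iff]
    cases h : Z j ω <;> simp
  have hqeq : ∀ j, (μ (Z j ⁻¹' ({false} : Set Bool))).toReal = q j := by
    intro j
    rw [hfalse j, prob_compl_eq_one_sub (hZmeas j (by trivial)),
      ENNReal.toReal_sub_of_le prob_le_one ENNReal.one_ne_top]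
    rw [hq, hp, htrue j]
    simp
  have hπprod : ∀ a : ℕ, (∏ j ∈ Finset.Icc a n, μ (Z j ⁻¹' ({false} : Set Bool))).toReal
      = π a := by
    intro a
    rw [ENNReal.toReal_prod]
    exact Finset.prod_congr rfl fun j _ => hqeq j
  have hwin : ∀ τ : Ω → ℕ, IsStopTime Z n τ →
      (μ {ω | Z (τ ω) ω = true ∧ ∀ t, τ ω < t → t ≤ n → Z t ω = false}).toReal
        = ∑ t ∈ Finset.Icc 1 n,
            (μ ({ω | τ ω = t} ∩ Z t ⁻¹' {true})).toReal * π (t+1) := by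
    intro τ hτ
    rw [win_eq_sum hZmeas hZindep τ hτ,
      ENNReal.toReal_sum (fun t _ => ENNReal.mul_ne_top (measure_ne_top μ _)
        (ENNReal.prod_ne_top fun j _ => measure_ne_top μ _))]
    exact Finset.sum_congr rfl fun t _ => by rw [ENNReal.toReal_mul, hπprod]
  -- measurability of {m ≤ τ}
  have hge : ∀ (τ : Ω → ℕ), IsStopTime Z n τ → ∀ m, 1 ≤ m →
      MeasurableSet[genFilt Z (m-1)] {ω | m ≤ τ ω} := by
    intro τ hτ m hm
    have hset : {ω | m ≤ τ ω} = ⋂ t ∈ Finset.Icc 1 (m-1), {ω | τ ω = t}ᶜ := by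
      ext ω
      simp only [Set.mem_setOf_eq, Set.mem_iInter, Set.mem_compl_iff, Finset.mem_Icc]
      have h1 := (hτ.1 ω).1
      constructor
      · intro h t ht
        omega
      · intro h
        by_contra hcon
        exact h (τ ω) ⟨h1, by omega⟩ rfl
    rw [hset]
    exact MeasurableSet.biInter (Finset.Icc 1 (m-1)).countable_toSet
      (fun t ht => (genFilt_mono (Finset.mem_Icc.1 ht).2 _ (hτ.2 t)).compl)
  -- the key upper bound by backwards induction
  have key : ∀ τ : Ω → ℕ, IsStopTime Z n τ → ∀ d m, m + d = n + 1 → 1 ≤ m →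
      ∑ t ∈ Finset.Icc m n, (μ ({ω | τ ω = t} ∩ Z t ⁻¹' {true})).toReal * π (t+1)
        ≤ (μ {ω | m ≤ τ ω}).toReal * u m := by
    intro τ hτ d
    induction d with
    | zero =>
      intro m hm _
      have hmn : m = n + 1 := by omega
      subst hmn
      have h1 : Finset.Icc (n+1) n = ∅ := Finset.Icc_eq_empty (by omega)
      have h2 : u (n+1) = 0 := by
        have e : max (n+1) tstar = n+1 := by omega
        simp only [hudef, hWdef, hSdef, e]
        have : Finset.Icc (n+1) n = ∅ := Finset.Icc_eq_empty (by omega)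
        simp [this]
      rw [h1, h2]
      simp
    | succ d ihd =>
      intro k hm hk1
      have hkn : k ≤ n := by omega
      have ih' := ihd (k+1) (by omega) (by omega)
      -- split the sum
      have hsplit : ∑ t ∈ Finset.Icc k n,
          (μ ({ω | τ ω = t} ∩ Z t ⁻¹' {true})).toReal * π (t+1)
          = (μ ({ω | τ ω = k} ∩ Z k ⁻¹' {true})).toReal * π (k+1)
            + ∑ t ∈ Finset.Icc (k+1) n,
              (μ ({ω | τ ω = t} ∩ Z t ⁻¹' {true})).toReal * π (t+1) := by
        rw [← Finset.Ico_add_one_right_eq_Icc, ← Finset.Ico_add_one_right_eq_Icc]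
        exact Finset.sum_eq_sum_Ico_succ_bot (by omega) _
      -- split the measure of {k ≤ τ}
      have hmsplit : (μ {ω | k ≤ τ ω}).toReal
          = (μ {ω | τ ω = k}).toReal + (μ {ω | k+1 ≤ τ ω}).toReal := by
        have hset : {ω | k ≤ τ ω} = {ω | τ ω = k} ∪ {ω | k+1 ≤ τ ω} := by
          ext ω; simp only [Set.mem_setOf_eq, Set.mem_union]; omega
        rw [hset, measure_union (by
            rw [Set.disjoint_left]; intro ω h1 h2
            simp only [Set.mem_setOf_eq] at h1 h2; omega)
          (genFilt_le hZmeas _ _ (hge τ hτ (k+1) (by omega))),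
          ENNReal.toReal_add (measure_ne_top μ _) (measure_ne_top μ _)]
      -- independence bound
      have hind : μ ({ω | k ≤ τ ω} ∩ Z k ⁻¹' {true})
          = μ {ω | k ≤ τ ω} * μ (Z k ⁻¹' {true}) := by
        have h1 := aux_indep hZmeas hZindep (show k - 1 ≤ n by omega)
        have e : k - 1 + 1 = k := by omega
        rw [e] at h1
        rw [Indep_iff] at h1
        exact h1 _ _ (hge τ hτ k hk1)
          (le_iSup₂ (f := fun j (_ : j ∈ Set.Icc k n) =>
            MeasurableSpace.comap (Z j) inferInstance) k ⟨le_rfl, hkn⟩ _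
            ⟨{true}, trivial, rfl⟩)
      have hacp : (μ ({ω | τ ω = k} ∩ Z k ⁻¹' {true})).toReal
          ≤ (μ {ω | k ≤ τ ω}).toReal * p k := by
        have h1 : μ ({ω | τ ω = k} ∩ Z k ⁻¹' {true})
            ≤ μ ({ω | k ≤ τ ω} ∩ Z k ⁻¹' {true}) :=
          measure_mono (Set.inter_subset_inter_left _ (fun ω h => by
            simp only [Set.mem_setOf_eq] at h ⊢; omega))
        calc (μ ({ω | τ ω = k} ∩ Z k ⁻¹' {true})).toReal
            ≤ (μ ({ω | k ≤ τ ω} ∩ Z k ⁻¹' {true})).toReal :=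
              ENNReal.toReal_mono (measure_ne_top μ _) h1
          _ = (μ {ω | k ≤ τ ω}).toReal * p k := by
              rw [hind, ENNReal.toReal_mul, htrue k, ← hp k]
      have hab : (μ ({ω | τ ω = k} ∩ Z k ⁻¹' {true})).toReal
          ≤ (μ {ω | τ ω = k}).toReal :=
        ENNReal.toReal_mono (measure_ne_top μ _) (measure_mono Set.inter_subset_left)
      rw [hsplit, hmsplit, hrec k hk1 hkn, hq k]
      rw [hmsplit] at hacp
      exact bruss_arith ENNReal.toReal_nonneg hab hacp ENNReal.toReal_nonneg
        (hu0 (k+1)) (hπ0 (k+1) (by omega)) (hp0 k) ih'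
  -- properties of τstar
  have hτsS : ∀ ω, τstar ω ∈ ({t | t ∈ Set.Icc tstar n ∧ Z t ω = true} ∪ {n} : Set ℕ) := by
    intro ω
    rw [hτstar ω]
    exact Nat.sInf_mem ⟨n, Or.inr rfl⟩
  have hτsdom : ∀ ω, tstar ≤ τstar ω ∧ τstar ω ≤ n := by
    intro ω
    have h1 := hτsS ω
    have h2 : τstar ω ≤ n := by
      rw [hτstar ω]; exact Nat.sInf_le (Or.inr rfl)
    rcases h1 with h | h
    · exact ⟨h.1.1, h2⟩
    · rw [Set.mem_singleton_iff] at h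
      exact ⟨h ▸ htsn, h2⟩
  have hchar : ∀ ω t, tstar ≤ t → t ≤ n →
      (τstar ω = t ↔
        ((∀ j, tstar ≤ j → j < t → Z j ω = false) ∧ (Z t ω = true ∨ t = n))) := by
    intro ω t htt htn2
    constructor
    · intro he
      constructor
      · intro j hj1 hj2
        by_contra hcon
        rw [Bool.not_eq_false] at hcon
        have hjS : j ∈ ({t | t ∈ Set.Icc tstar n ∧ Z t ω = true} ∪ {n} : Set ℕ) :=
          Or.inl ⟨⟨hj1, by omega⟩, hcon⟩
        have hle : τstar ω ≤ j := by rw [hτstar ω]; exact Nat.sInf_le hjS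
        omega
      · have h := hτsS ω
        rw [he] at h
        rcases h with h | h
        · exact Or.inl h.2
        · exact Or.inr h
    · rintro ⟨h1, h2⟩
      have htS : t ∈ ({t | t ∈ Set.Icc tstar n ∧ Z t ω = true} ∪ {n} : Set ℕ) := by
        rcases h2 with h2 | h2
        · exact Or.inl ⟨⟨htt, htn2⟩, h2⟩
        · exact Or.inr (by simp [h2])
      have hub : τstar ω ≤ t := by rw [hτstar ω]; exact Nat.sInf_le htS
      have hlb : t ≤ τstar ω := by
        by_contra hcon
        push_neg at hcon
        rcases hτsS ω with h | h
        · have hf := h1 _ h.1.1 (by omega)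
          rw [h.2] at hf
          exact Bool.noConfusion hf
        · have hn' : τstar ω = n := h
          omega
      omega
  have hempty : ∀ t, t < tstar → {ω | τstar ω = t} = ∅ := by
    intro t ht
    ext ω
    simp only [Set.mem_setOf_eq, Set.mem_empty_iff_false, iff_false]
    intro h
    have := (hτsdom ω).1
    omega
  have hstop : IsStopTime Z n τstar := by
    constructor
    · intro ω
      exact ⟨le_trans hts1 (hτsdom ω).1, (hτsdom ω).2⟩
    · intro t
      rcases lt_or_ge t tstar with h | h
      · rw [hempty t h]
        exact @MeasurableSet.empty _ (genFilt Z t)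
      rcases le_or_gt t n with h2 | h2
      · have hset : {ω | τstar ω = t}
            = (⋂ j ∈ Finset.Ico tstar t, Z j ⁻¹' ({false} : Set Bool)) ∩
              (if t = n then Set.univ else Z t ⁻¹' {true}) := by
          ext ω
          rw [Set.mem_setOf_eq, hchar ω t h h2]
          simp only [Set.mem_inter_iff, Set.mem_iInter, Finset.mem_Ico, Set.mem_preimage,
            Set.mem_singleton_iff]
          constructor
          · rintro ⟨h1', h2'⟩
            refine ⟨fun j hj => h1' j hj.1 hj.2, ?_⟩
            split_ifs with hteq
            · trivial
            · rcases h2' with h' | h'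
              · exact h'
              · exact absurd h' hteq
          · rintro ⟨h1', h2'⟩
            refine ⟨fun j hj1 hj2 => h1' j ⟨hj1, hj2⟩, ?_⟩
            split_ifs at h2' with hteq
            · exact Or.inr hteq
            · exact Or.inl h2'
        rw [hset]
        refine MeasurableSet.inter ?_ ?_
        · exact MeasurableSet.biInter (Finset.Ico tstar t).countable_toSet
            (fun j hj => comap_le_genFilt (le_trans hts1 (Finset.mem_Ico.1 hj).1)
              (le_of_lt (Finset.mem_Ico.1 hj).2) _ ⟨{false}, trivial, rfl⟩)
        · split_ifs
          · exact @MeasurableSet.univ _ (genFilt Z t)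
          · exact comap_le_genFilt (le_trans hts1 h) le_rfl _ ⟨{true}, trivial, rfl⟩
      · have hset : {ω | τstar ω = t} = ∅ := by
          ext ω
          simp only [Set.mem_setOf_eq, Set.mem_empty_iff_false, iff_false]
          intro he
          have := (hτsdom ω).2
          omega
        rw [hset]
        exact @MeasurableSet.empty _ (genFilt Z t)
  -- the event {τstar = t, Z t = 1} as a product event
  have hτt : ∀ t, tstar ≤ t → t ≤ n → {ω | τstar ω = t} ∩ Z t ⁻¹' {true}
      = ⋂ j ∈ Finset.Icc tstar t,
          Z j ⁻¹' (if j = t then ({true} : Set Bool) else {false}) := by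
    intro t h1 h2
    ext ω
    rw [Set.mem_inter_iff, Set.mem_setOf_eq, hchar ω t h1 h2]
    simp only [Set.mem_iInter, Finset.mem_Icc, Set.mem_preimage, Set.mem_singleton_iff]
    constructor
    · rintro ⟨⟨hj, _⟩, ht⟩ j hjm
      by_cases hjt : j = t
      · subst hjt
        rw [if_pos rfl]
        simp [ht]
      · rw [if_neg hjt]
        have hf := hj j hjm.1 (by omega)
        simp [hf]
    · intro h
      have ht : Z t ω = true := by
        have := h t ⟨h1, le_rfl⟩
        rw [if_pos rfl] at this
        simpa using this
      refine ⟨⟨fun j hj1 hj2 => ?_, Or.inl ht⟩, by simpa using ht⟩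
      have := h j ⟨hj1, by omega⟩
      rw [if_neg (by omega)] at this
      simpa using this
  -- value of each term for τstar
  have hval : ∀ t, tstar ≤ t → t ≤ n →
      (μ ({ω | τstar ω = t} ∩ Z t ⁻¹' {true})).toReal * π (t+1) = π tstar * r t := by
    intro t h1 h2
    rw [hτt t h1 h2, aux_prod hZindep _ (fun j hj => by
        have := Finset.mem_Icc.1 hj
        exact ⟨le_trans hts1 this.1, le_trans this.2 h2⟩) _,
      ENNReal.toReal_prod]
    have hprodeq : (∏ j ∈ Finset.Icc tstar t,
        (μ (Z j ⁻¹' (if j = t then ({true} : Set Bool) else {false}))).toReal)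
        = (∏ j ∈ Finset.Ico tstar t, q j) * p t := by
      rw [← Finset.Ico_add_one_right_eq_Icc, Finset.prod_Ico_succ_top (by omega : tstar ≤ t)]
      refine congrArg₂ (· * ·) (Finset.prod_congr rfl fun j hj => ?_) ?_
      · rw [if_neg (by have := Finset.mem_Ico.1 hj; omega)]
        exact hqeq j
      · rw [if_pos rfl, htrue, ← hp]
    rw [hprodeq]
    have hπsplit : π tstar = (∏ j ∈ Finset.Ico tstar t, q j) * (q t * π (t+1)) := by
      have e1 : π tstar = ∏ j ∈ Finset.Ico tstar (n+1), q j := by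
        simp only [hπdef]
        rw [← Finset.Ico_add_one_right_eq_Icc]
      rw [e1, ← Finset.prod_Ico_consecutive q (show tstar ≤ t by omega)
        (show t ≤ n+1 by omega)]
      congr 1
      rw [Finset.prod_eq_prod_Ico_succ_bot (show t < n+1 by omega)]
      congr 1
    rw [hπsplit]
    have hqrt := hqr t ⟨le_trans hts1 h1, h2⟩
    linear_combination (-((∏ j ∈ Finset.Ico tstar t, q j) * π (t+1))) * hqrt
  -- the winning probability of τstar
  have hwinτs : (μ {ω | Z (τstar ω) ω = true ∧
      ∀ t, τstar ω < t → t ≤ n → Z t ω = false}).toReal = W tstar := by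
    rw [hwin τstar hstop]
    have hsub : ∀ t ∈ Finset.Icc 1 n, t ∉ Finset.Icc tstar n →
        (μ ({ω | τstar ω = t} ∩ Z t ⁻¹' {true})).toReal * π (t+1) = 0 := by
      intro t ht hnt
      have hlt : t < tstar := by
        simp only [Finset.mem_Icc] at ht hnt
        omega
      rw [hempty t hlt]
      simp
    rw [← Finset.sum_subset (Finset.Icc_subset_Icc hts1 le_rfl) hsub]
    calc ∑ t ∈ Finset.Icc tstar n,
          (μ ({ω | τstar ω = t} ∩ Z t ⁻¹' {true})).toReal * π (t+1)
        = ∑ t ∈ Finset.Icc tstar n, π tstar * r t :=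
          Finset.sum_congr rfl fun t ht =>
            hval t (Finset.mem_Icc.1 ht).1 (Finset.mem_Icc.1 ht).2
      _ = π tstar * S tstar := by rw [← Finset.mul_sum]
      _ = W tstar := rfl
  -- the upper bound
  have hub : ∀ x ∈ {x : ℝ | ∃ τ : Ω → ℕ, IsStopTime Z n τ ∧
      x = (μ {ω | Z (τ ω) ω = true ∧
            ∀ t, τ ω < t → t ≤ n → Z t ω = false}).toReal},
      x ≤ (μ {ω | Z (τstar ω) ω = true ∧
            ∀ t, τstar ω < t → t ≤ n → Z t ω = false}).toReal := by
    rintro x ⟨τ, hτ, rfl⟩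
    rw [hwin τ hτ, hwinτs]
    have h1 := key τ hτ n 1 (by omega) le_rfl
    have h2 : {ω | 1 ≤ τ ω} = Set.univ := by
      ext ω
      simp only [Set.mem_setOf_eq, Set.mem_univ, iff_true]
      exact (hτ.1 ω).1
    have h3 : u 1 = W tstar := by
      simp only [hudef]
      congr 1
      omega
    rw [h2, h3, measure_univ] at h1
    simpa using h1
  exact ⟨⟨⟨τstar, hstop, rfl⟩, hub⟩, by rw [hwinτs]⟩
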